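/- For every integer k ≥ 1 the following two identities of smooth matrix-valued functions hold at every point of ℝ²: J((4|T|²/(9(k+1)))(λ0 − λ2)^{k+1}(λ2 − λ1)) = 2(λ0 − λ2)^k sym(t_{c,0}⊗t_{c,1}) − k(λ0 − λ2)^{k−1}(λ1 − λ2) t_{c,1}⊗t_{c,1}, and J((4|T|²/(9(k+1)))(λ0 − λ1)^{k+1}(λ2 − λ1)) = −2(λ0 − λ1)^k sym(t_{c,0}⊗t_{c,2}) + k(λ0 − λ1)^{k−1}(λ2 − λ1) t_{c,2}⊗t_{c,2}. Consequently, the function v0 = (4|T|²/(9(k+1)))(λ0R)^{k+1}(λ2 − λ1) satisfies J(v0)(x) = ψ0(x) for every x ∈ Ω0 ∪ Ω1 ∪ Ω2, and in particular div ψ0 = 0 on each of the three open regions Ω0, Ω1, Ω2. -/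

import Mathlib

noncomputable section

open Matrix MeasureTheory

abbrev Vec2 : Type := Fin 2 → ℝ

/-- Euclidean dot product on `ℝ²`. -/
def dot2 (a b : Vec2) : ℝ := a 0 * b 0 + a 1 * b 1

/-- Partial derivative of `f` in the `i`-th coordinate direction. -/
def pd (i : Fin 2) (f : Vec2 → ℝ) (x : Vec2) : ℝ := fderiv ℝ f x (Pi.single i 1)

/-- The matrix `a bᵀ`. -/
def outer (a b : Vec2) : Matrix (Fin 2) (Fin 2) ℝ := fun i j => a i * b j

/-- `sym(a ⊗ b) = (a bᵀ + b aᵀ)/2`. -/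
def symOuter (a b : Vec2) : Matrix (Fin 2) (Fin 2) ℝ := (1 / 2 : ℝ) • (outer a b + outer b a)

/-- The Airy operator (rotated Hessian)
`J(f) = [[∂²f/∂x₂², −∂²f/∂x₁∂x₂], [−∂²f/∂x₁∂x₂, ∂²f/∂x₁²]]`. -/
def airy (f : Vec2 → ℝ) (x : Vec2) : Matrix (Fin 2) (Fin 2) ℝ :=
  !![pd 1 (pd 1 f) x, -(pd 0 (pd 1 f) x); -(pd 0 (pd 1 f) x), pd 0 (pd 0 f) x]

/-- `f` is the evaluation function of a real polynomial in two variables of total degree ≤ m. -/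
def IsPolyDeg (m : ℕ) (f : Vec2 → ℝ) : Prop :=
  ∃ P : MvPolynomial (Fin 2) ℝ, P.totalDegree ≤ m ∧ ∀ x, f x = MvPolynomial.eval x P

/-- `f` is the evaluation function of a real polynomial in two variables. -/
def IsPolyFun (f : Vec2 → ℝ) : Prop :=
  ∃ P : MvPolynomial (Fin 2) ℝ, ∀ x, f x = MvPolynomial.eval x P

/-- `λᵢᴿ = λᵢ − min(λ₀, λ₁, λ₂)`: hat function of vertex `vᵢ` on the barycentric refinement. -/
def lamR (lam : Fin 3 → Vec2 → ℝ) (i : Fin 3) (x : Vec2) : ℝ :=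
  lam i x - min (lam 0 x) (min (lam 1 x) (lam 2 x))

/-- `x ∈ Ωⱼ`: the region where `λⱼ` is the strict minimum of the barycentric coordinates. -/
def inReg (lam : Fin 3 → Vec2 → ℝ) (j : Fin 3) (x : Vec2) : Prop :=
  ∀ i : Fin 3, i ≠ j → lam j x < lam i x

/-- The branch formula of `ψᵢ` on `Ω_{i+2}`. -/
def psiA (lam : Fin 3 → Vec2 → ℝ) (tc : Fin 3 → Vec2) (k : ℕ) (i : Fin 3) (x : Vec2) :
    Matrix (Fin 2) (Fin 2) ℝ :=
  (2 * (lam i x - lam (i + 2) x) ^ k) • symOuter (tc i) (tc (i + 1)) -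
    ((k : ℝ) * (lam i x - lam (i + 2) x) ^ (k - 1) * (lam (i + 1) x - lam (i + 2) x)) •
      outer (tc (i + 1)) (tc (i + 1))

/-- The branch formula of `ψᵢ` on `Ω_{i+1}`. -/
def psiB (lam : Fin 3 → Vec2 → ℝ) (tc : Fin 3 → Vec2) (k : ℕ) (i : Fin 3) (x : Vec2) :
    Matrix (Fin 2) (Fin 2) ℝ :=
  -((2 * (lam i x - lam (i + 1) x) ^ k) • symOuter (tc i) (tc (i + 2))) +
    ((k : ℝ) * (lam i x - lam (i + 1) x) ^ (k - 1) * (lam (i + 2) x - lam (i + 1) x)) •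
      outer (tc (i + 2)) (tc (i + 2))

open Classical in
/-- The piecewise enrichment stress `ψᵢ`. -/
def psiFun (lam : Fin 3 → Vec2 → ℝ) (tc : Fin 3 → Vec2) (k : ℕ) (i : Fin 3) (x : Vec2) :
    Matrix (Fin 2) (Fin 2) ℝ :=
  if inReg lam (i + 2) x then psiA lam tc k i x
  else if inReg lam (i + 1) x then psiB lam tc k i x
  else 0

/-- The `Ωⱼ`-branch polynomial formula of `ψᵢ` (value used on the closed edge `eⱼ`). -/
def psiEdge (lam : Fin 3 → Vec2 → ℝ) (tc : Fin 3 → Vec2) (k : ℕ) (i j : Fin 3) (x : Vec2) :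
    Matrix (Fin 2) (Fin 2) ℝ :=
  if j = i + 2 then psiA lam tc k i x
  else if j = i + 1 then psiB lam tc k i x
  else 0

/-- The Airy potential `vᵢ = (4|T|²/(9(k+1))) (λᵢᴿ)^{k+1} (λ_{i+2} − λ_{i+1})`. -/
def vEnrich (lam : Fin 3 → Vec2 → ℝ) (area : ℝ) (k : ℕ) (i : Fin 3) (x : Vec2) : ℝ :=
  4 * area ^ 2 / (9 * (k + 1)) * (lamR lam i x) ^ (k + 1) * (lam (i + 2) x - lam (i + 1) x)

/-- `v_{i,i+1} = (C_T/(k+1))[(λᵢᴿ)^{k+1} − λᵢ^{k+1}](λ_{i+2} − λ_{i+1}) − C_T λᵢ^k λ_{i+1} λ_{i+2}`. -/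
def vE1 (lam : Fin 3 → Vec2 → ℝ) (area : ℝ) (k : ℕ) (i : Fin 3) (x : Vec2) : ℝ :=
  4 * area ^ 2 / 9 / (k + 1) * ((lamR lam i x) ^ (k + 1) - (lam i x) ^ (k + 1)) *
      (lam (i + 2) x - lam (i + 1) x) -
    4 * area ^ 2 / 9 * (lam i x) ^ k * lam (i + 1) x * lam (i + 2) x

/-- `v_{i,i+2} = (C_T/(k+1))[(λᵢᴿ)^{k+1} − λᵢ^{k+1}](λ_{i+2} − λ_{i+1}) + C_T λᵢ^k λ_{i+1} λ_{i+2}`. -/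
def vE2 (lam : Fin 3 → Vec2 → ℝ) (area : ℝ) (k : ℕ) (i : Fin 3) (x : Vec2) : ℝ :=
  4 * area ^ 2 / 9 / (k + 1) * ((lamR lam i x) ^ (k + 1) - (lam i x) ^ (k + 1)) *
      (lam (i + 2) x - lam (i + 1) x) +
    4 * area ^ 2 / 9 * (lam i x) ^ k * lam (i + 1) x * lam (i + 2) x

/-- `wᵢ = (1/(4 C_T c_{i,i})) (v_{i+1,i} − v_{i+2,i})`, with `k = 1`. -/
def wFun (lam : Fin 3 → Vec2 → ℝ) (g : Fin 3 → Vec2) (n : Fin 3 → Vec2) (area : ℝ)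
    (i : Fin 3) (x : Vec2) : ℝ :=
  1 / (4 * (4 * area ^ 2 / 9) * dot2 (g i) (n i)) *
    (vE2 lam area 1 (i + 1) x - vE1 lam area 1 (i + 2) x)

/-- `sᵢ = λ_{i+1} λ_{i+2} (λ_{i+1} − λ_{i+2})`. -/
def sFun (lam : Fin 3 → Vec2 → ℝ) (i : Fin 3) (x : Vec2) : ℝ :=
  lam (i + 1) x * lam (i + 2) x * (lam (i + 1) x - lam (i + 2) x)

/-- `uᵢ = sᵢ − 3(c_{i+1,i} − c_{i+2,i}) wᵢ − c_{i+1,i+1} w_{i+1} + c_{i+2,i+2} w_{i+2}`. -/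
def uFun (lam : Fin 3 → Vec2 → ℝ) (g : Fin 3 → Vec2) (n : Fin 3 → Vec2) (area : ℝ)
    (i : Fin 3) (x : Vec2) : ℝ :=
  sFun lam i x - 3 * (dot2 (g (i + 1)) (n i) - dot2 (g (i + 2)) (n i)) * wFun lam g n area i x -
    dot2 (g (i + 1)) (n (i + 1)) * wFun lam g n area (i + 1) x +
    dot2 (g (i + 2)) (n (i + 2)) * wFun lam g n area (i + 2) x

/-- The closed triangle `T = conv{v₀, v₁, v₂}`. -/
def Tset (v : Fin 3 → Vec2) : Set Vec2 := convexHull ℝ {v 0, v 1, v 2}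

/-- The closed edge `eⱼ` of `T` opposite the vertex `vⱼ`. -/
def edgeSeg (v : Fin 3 → Vec2) (j : Fin 3) : Set Vec2 := segment ℝ (v (j + 1)) (v (j + 2))

/-- `det(v₁ − v₀, v₂ − v₀)`. -/
def detT (v : Fin 3 → Vec2) : ℝ :=
  (v 1 0 - v 0 0) * (v 2 1 - v 0 1) - (v 1 1 - v 0 1) * (v 2 0 - v 0 0)


/-! ### Auxiliary lemmas -/

def dotCLM (a : Vec2) : Vec2 →L[ℝ] ℝ :=
  a 0 • (ContinuousLinearMap.proj 0 : Vec2 →L[ℝ] ℝ) +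
  a 1 • (ContinuousLinearMap.proj 1 : Vec2 →L[ℝ] ℝ)

lemma dotCLM_apply (a y : Vec2) : dotCLM a y = dot2 a y := by
  simp [dotCLM, dot2]

lemma dot2_single (a : Vec2) (i : Fin 2) : dot2 a (Pi.single i 1) = a i := by
  fin_cases i <;> simp [dot2]

lemma hasFDerivAt_aff (a : Vec2) (c : ℝ) (x : Vec2) :
    HasFDerivAt (fun y => dot2 a y + c) (dotCLM a) x := by
  have h0 : HasFDerivAt (fun y : Vec2 => y 0)
      (ContinuousLinearMap.proj 0 : Vec2 →L[ℝ] ℝ) x :=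
    (ContinuousLinearMap.proj 0 : Vec2 →L[ℝ] ℝ).hasFDerivAt
  have h1 : HasFDerivAt (fun y : Vec2 => y 1)
      (ContinuousLinearMap.proj 1 : Vec2 →L[ℝ] ℝ) x :=
    (ContinuousLinearMap.proj 1 : Vec2 →L[ℝ] ℝ).hasFDerivAt
  exact (((h0.const_mul (a 0)).add (h1.const_mul (a 1))).add_const c)

lemma hasFDerivAt_CLM (a b : Vec2) (ca cb C : ℝ) (n : ℕ) (x : Vec2) :
    HasFDerivAt (fun y => C * (dot2 a y + ca) ^ n * (dot2 b y + cb))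
      ((C * ((n:ℝ) * (dot2 a x + ca) ^ (n-1) * (dot2 b x + cb))) • dotCLM a
        + (C * (dot2 a x + ca) ^ n) • dotCLM b) x := by
  have hL := hasFDerivAt_aff a ca x
  have hM := hasFDerivAt_aff b cb x
  have hpow : HasFDerivAt (fun y => (dot2 a y + ca) ^ n)
      (((n:ℝ) * (dot2 a x + ca) ^ (n-1)) • dotCLM a) x :=
    (hasDerivAt_pow n (dot2 a x + ca)).comp_hasFDerivAt x hL
  have h := (hpow.const_mul C).fun_mul hM
  convert h using 1
  rotate_right
  ext y
  simp [smul_smul]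
  ring
  all_goals rfl

lemma diff_CLM (a b : Vec2) (ca cb C : ℝ) (n : ℕ) (x : Vec2) :
    DifferentiableAt ℝ (fun y => C * (dot2 a y + ca) ^ n * (dot2 b y + cb)) x :=
  (hasFDerivAt_CLM a b ca cb C n x).differentiableAt

lemma pd_CLM (a b : Vec2) (ca cb C : ℝ) (n : ℕ) (i : Fin 2) (x : Vec2) :
    pd i (fun y => C * (dot2 a y + ca) ^ n * (dot2 b y + cb)) x
      = C * ((n:ℝ) * (dot2 a x + ca) ^ (n-1) * (dot2 b x + cb) * a i
           + (dot2 a x + ca) ^ n * b i) := by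
  rw [pd, (hasFDerivAt_CLM a b ca cb C n x).fderiv]
  simp [dotCLM_apply, dot2_single]
  ring

lemma pd_add (f g : Vec2 → ℝ) (i : Fin 2) (x : Vec2)
    (hf : DifferentiableAt ℝ f x) (hg : DifferentiableAt ℝ g x) :
    pd i (fun y => f y + g y) x = pd i f x + pd i g x := by
  simp [pd, fderiv_fun_add hf hg]

lemma pd_pd_CLM (a b : Vec2) (ca cb C : ℝ) (n : ℕ) (i j : Fin 2) (x : Vec2) :
    pd j (pd i (fun y => C * (dot2 a y + ca) ^ n * (dot2 b y + cb))) x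
      = C * ((n:ℝ) * (((n-1:ℕ):ℝ) * ((dot2 a x + ca) ^ (n-1-1) * ((dot2 b x + cb) * (a i * a j))))
           + (n:ℝ) * ((dot2 a x + ca) ^ (n-1) * (a i * b j + a j * b i))) := by
  have hfun : pd i (fun y => C * (dot2 a y + ca) ^ n * (dot2 b y + cb))
      = fun y => (C * (n:ℝ) * a i) * (dot2 a y + ca) ^ (n-1) * (dot2 b y + cb)
               + (C * b i) * (dot2 a y + ca) ^ n * (dot2 (0:Vec2) y + 1) := by
    funext y
    rw [pd_CLM]
    simp [dot2]
    ring
  rw [hfun, pd_add _ _ j x (diff_CLM _ _ _ _ _ _ _) (diff_CLM _ _ _ _ _ _ _),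
    pd_CLM, pd_CLM]
  simp [dot2]
  ring

lemma pd_congr {f g : Vec2 → ℝ} {s : Set Vec2} (hs : IsOpen s) {x : Vec2} (hx : x ∈ s)
    (h : ∀ y ∈ s, f y = g y) (i : Fin 2) : pd i f x = pd i g x := by
  unfold pd
  rw [Filter.EventuallyEq.fderiv_eq (Filter.eventuallyEq_of_mem (hs.mem_nhds hx) h)]

lemma airy_congr {f g : Vec2 → ℝ} {s : Set Vec2} (hs : IsOpen s) {x : Vec2} (hx : x ∈ s)
    (h : ∀ y ∈ s, f y = g y) : airy f x = airy g x := by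
  have h1 : ∀ i : Fin 2, ∀ y ∈ s, pd i f y = pd i g y :=
    fun i y hy => pd_congr hs hy h i
  unfold airy
  rw [pd_congr hs hx (h1 1) 1, pd_congr hs hx (h1 1) 0, pd_congr hs hx (h1 0) 0]

lemma pd_zero_fun (i : Fin 2) (x : Vec2) : pd i (fun _ : Vec2 => (0:ℝ)) x = 0 := by
  simp [pd]

lemma airy_zero_fun (x : Vec2) : airy (fun _ : Vec2 => (0:ℝ)) x = 0 := by
  unfold airy
  have h : pd 1 (fun _ : Vec2 => (0:ℝ)) = fun _ : Vec2 => (0:ℝ) := funext fun y => pd_zero_fun 1 y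
  have h0 : pd 0 (fun _ : Vec2 => (0:ℝ)) = fun _ : Vec2 => (0:ℝ) := funext fun y => pd_zero_fun 0 y
  rw [h, h0, h, h0]
  ext i j
  fin_cases i <;> fin_cases j <;> simp [pd_zero_fun]

lemma pd_entry (a b : Vec2) (ca cb c1 c2 : ℝ) (m : ℕ) (j : Fin 2) (x : Vec2) :
    pd j (fun y => c1 * (dot2 a y + ca) ^ m
        + c2 * (dot2 a y + ca) ^ (m-1) * (dot2 b y + cb)) x
    = c1 * ((m:ℝ) * (dot2 a x + ca) ^ (m-1) * a j)
      + c2 * (((m-1:ℕ):ℝ) * (dot2 a x + ca) ^ (m-1-1) * (dot2 b x + cb) * a j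
        + (dot2 a x + ca) ^ (m-1) * b j) := by
  have hfun : (fun y => c1 * (dot2 a y + ca) ^ m
        + c2 * (dot2 a y + ca) ^ (m-1) * (dot2 b y + cb))
      = fun y => c1 * (dot2 a y + ca) ^ m * (dot2 (0:Vec2) y + 1)
        + c2 * (dot2 a y + ca) ^ (m-1) * (dot2 b y + cb) := by
    funext y
    simp [dot2]
  rw [hfun, pd_add _ _ j x (diff_CLM _ _ _ _ _ _ _) (diff_CLM _ _ _ _ _ _ _), pd_CLM, pd_CLM]
  simp only [dot2, Pi.zero_apply]
  ring

/-- the two Airy identities for the polynomial branches of the potential `v₀`,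
the identity `J(v₀) = ψ₀` on `Ω₀ ∪ Ω₁ ∪ Ω₂`, and the consequence `div ψ₀ = 0` on each of
the three open regions. -/
theorem airy_potential_of_enrichment_stress
    (v : Fin 3 → Vec2) (hv : AffineIndependent ℝ v)
    (lam : Fin 3 → Vec2 → ℝ) (g : Fin 3 → Vec2) (cst : Fin 3 → ℝ)
    (hlam : ∀ i x, lam i x = dot2 (g i) x + cst i)
    (hdelta : ∀ i j, lam i (v j) = if i = j then 1 else 0)
    (vc : Vec2) (hvc : vc = (1 / 3 : ℝ) • (v 0 + v 1 + v 2))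
    (tc : Fin 3 → Vec2) (htc : ∀ i, tc i = v i - vc)
    (area : ℝ) (harea : area = |detT v| / 2)
    (k : ℕ) (hk : 1 ≤ k) :
    (∀ x, airy
        (fun y => 4 * area ^ 2 / (9 * (k + 1)) * (lam 0 y - lam 2 y) ^ (k + 1) *
          (lam 2 y - lam 1 y)) x = psiA lam tc k 0 x) ∧
    (∀ x, airy
        (fun y => 4 * area ^ 2 / (9 * (k + 1)) * (lam 0 y - lam 1 y) ^ (k + 1) *
          (lam 2 y - lam 1 y)) x = psiB lam tc k 0 x) ∧
    (∀ x, inReg lam 0 x ∨ inReg lam 1 x ∨ inReg lam 2 x →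
        airy (vEnrich lam area k 0) x = psiFun lam tc k 0 x) ∧
    (∀ x, inReg lam 0 x ∨ inReg lam 1 x ∨ inReg lam 2 x → ∀ i : Fin 2,
        pd 0 (fun y => psiFun lam tc k 0 y i 0) x +
          pd 1 (fun y => psiFun lam tc k 0 y i 1) x = 0) := by
  
  have hd2 : ∀ i j : Fin 3, g i 0 * v j 0 + g i 1 * v j 1 + cst i = if i = j then 1 else 0 := by
    intro i j
    have h := hdelta i j
    rw [hlam] at h
    simpa [dot2] using h
  have h00 : g 0 0 * v 0 0 + g 0 1 * v 0 1 + cst 0 = 1 := by simpa using hd2 0 0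
  have h01 : g 0 0 * v 1 0 + g 0 1 * v 1 1 + cst 0 = 0 := by simpa using hd2 0 1
  have h02 : g 0 0 * v 2 0 + g 0 1 * v 2 1 + cst 0 = 0 := by simpa using hd2 0 2
  have h10 : g 1 0 * v 0 0 + g 1 1 * v 0 1 + cst 1 = 0 := by simpa using hd2 1 0
  have h11 : g 1 0 * v 1 0 + g 1 1 * v 1 1 + cst 1 = 1 := by simpa using hd2 1 1
  have h12 : g 1 0 * v 2 0 + g 1 1 * v 2 1 + cst 1 = 0 := by simpa using hd2 1 2
  have h20 : g 2 0 * v 0 0 + g 2 1 * v 0 1 + cst 2 = 0 := by simpa using hd2 2 0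
  have h21 : g 2 0 * v 1 0 + g 2 1 * v 1 1 + cst 2 = 0 := by simpa using hd2 2 1
  have h22 : g 2 0 * v 2 0 + g 2 1 * v 2 1 + cst 2 = 1 := by simpa using hd2 2 2
  have hA1 : (g 0 0 - g 2 0) * (v 1 0 - v 0 0) + (g 0 1 - g 2 1) * (v 1 1 - v 0 1) = -1 := by
    linear_combination h01 - h00 - h21 + h20
  have hA2 : (g 0 0 - g 2 0) * (v 2 0 - v 0 0) + (g 0 1 - g 2 1) * (v 2 1 - v 0 1) = -2 := by
    linear_combination h02 - h00 - h22 + h20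
  have hB1 : (g 2 0 - g 1 0) * (v 1 0 - v 0 0) + (g 2 1 - g 1 1) * (v 1 1 - v 0 1) = -1 := by
    linear_combination h21 - h20 - h11 + h10
  have hB2 : (g 2 0 - g 1 0) * (v 2 0 - v 0 0) + (g 2 1 - g 1 1) * (v 2 1 - v 0 1) = 1 := by
    linear_combination h22 - h20 - h12 + h10
  have hC1 : (g 0 0 - g 1 0) * (v 1 0 - v 0 0) + (g 0 1 - g 1 1) * (v 1 1 - v 0 1) = -2 := by
    linear_combination h01 - h00 - h11 + h10
  have hC2 : (g 0 0 - g 1 0) * (v 2 0 - v 0 0) + (g 0 1 - g 1 1) * (v 2 1 - v 0 1) = -1 := by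
    linear_combination h02 - h00 - h12 + h10
  have ht10 : tc 1 0 = -(detT v * (g 0 1 - g 2 1)) / 3 := by
    rw [htc, hvc]
    simp only [Pi.sub_apply, Pi.smul_apply, Pi.add_apply, smul_eq_mul, detT]
    linear_combination (1/3 : ℝ) * ((v 1 0 - v 0 0) * hA2 - (v 2 0 - v 0 0) * hA1)
  have ht11 : tc 1 1 = detT v * (g 0 0 - g 2 0) / 3 := by
    rw [htc, hvc]
    simp only [Pi.sub_apply, Pi.smul_apply, Pi.add_apply, smul_eq_mul, detT]
    linear_combination (1/3 : ℝ) * ((v 1 1 - v 0 1) * hA2 - (v 2 1 - v 0 1) * hA1)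
  have ht00 : tc 0 0 = -(detT v * (g 2 1 - g 1 1)) / 3 := by
    rw [htc, hvc]
    simp only [Pi.sub_apply, Pi.smul_apply, Pi.add_apply, smul_eq_mul, detT]
    linear_combination (1/3 : ℝ) * ((v 1 0 - v 0 0) * hB2 - (v 2 0 - v 0 0) * hB1)
  have ht01 : tc 0 1 = detT v * (g 2 0 - g 1 0) / 3 := by
    rw [htc, hvc]
    simp only [Pi.sub_apply, Pi.smul_apply, Pi.add_apply, smul_eq_mul, detT]
    linear_combination (1/3 : ℝ) * ((v 1 1 - v 0 1) * hB2 - (v 2 1 - v 0 1) * hB1)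
  have ht20 : tc 2 0 = detT v * (g 0 1 - g 1 1) / 3 := by
    rw [htc, hvc]
    simp only [Pi.sub_apply, Pi.smul_apply, Pi.add_apply, smul_eq_mul, detT]
    linear_combination (1/3 : ℝ) * ((v 2 0 - v 0 0) * hC1 - (v 1 0 - v 0 0) * hC2)
  have ht21 : tc 2 1 = -(detT v * (g 0 0 - g 1 0)) / 3 := by
    rw [htc, hvc]
    simp only [Pi.sub_apply, Pi.smul_apply, Pi.add_apply, smul_eq_mul, detT]
    linear_combination (1/3 : ℝ) * ((v 2 1 - v 0 1) * hC1 - (v 1 1 - v 0 1) * hC2)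
  have harea2 : area ^ 2 = detT v ^ 2 / 4 := by
    rw [harea, div_pow, sq_abs]
    norm_num
  have hk1 : ((k:ℝ) + 1) ≠ 0 := by positivity
  have hCC : ∀ X Y : ℝ, 4 * area ^ 2 / (9 * ((k:ℝ) + 1)) * (((k:ℝ) + 1) * X + ((k:ℝ) + 1) * Y)
      = detT v ^ 2 / 9 * X + detT v ^ 2 / 9 * Y := by
    intro X Y
    rw [harea2]
    field_simp
  have part1A : ∀ x, airy
      (fun y => 4 * area ^ 2 / (9 * (k + 1)) * (lam 0 y - lam 2 y) ^ (k + 1) *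
        (lam 2 y - lam 1 y)) x = psiA lam tc k 0 x := by
    intro x
    have hfun : (fun y => 4 * area ^ 2 / (9 * ((k:ℝ) + 1)) * (lam 0 y - lam 2 y) ^ (k + 1) *
        (lam 2 y - lam 1 y))
        = fun y => (4 * area ^ 2 / (9 * ((k:ℝ) + 1))) *
            (dot2 (g 0 - g 2) y + (cst 0 - cst 2)) ^ (k + 1) *
            (dot2 (g 2 - g 1) y + (cst 2 - cst 1)) := by
      funext y
      rw [hlam 0 y, hlam 1 y, hlam 2 y]
      simp only [dot2, Pi.sub_apply]
      ring
    rw [hfun]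
    ext i j
    fin_cases i <;> fin_cases j <;>
      simp only [Fin.mk_zero, Fin.mk_one, airy, psiA, Matrix.of_apply, Matrix.cons_val', Matrix.cons_val_zero,
        Matrix.cons_val_one, Matrix.head_cons, Matrix.head_fin_const, Matrix.empty_val',
        Matrix.cons_val_fin_one, Matrix.sub_apply, Matrix.smul_apply, Matrix.add_apply,
        symOuter, outer, smul_eq_mul,
        show ((0:Fin 3) + 1) = 1 from rfl, show ((0:Fin 3) + 2) = 2 from rfl] <;>
      rw [pd_pd_CLM] <;>
      simp only [Nat.add_sub_cancel, Nat.cast_add, Nat.cast_one] <;>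
      rw [hCC] <;>
      simp only [ht00, ht01, ht10, ht11] <;>
      simp only [hlam, dot2, Pi.sub_apply] <;>
      ring
  have part1B : ∀ x, airy
      (fun y => 4 * area ^ 2 / (9 * (k + 1)) * (lam 0 y - lam 1 y) ^ (k + 1) *
        (lam 2 y - lam 1 y)) x = psiB lam tc k 0 x := by
    intro x
    have hfun : (fun y => 4 * area ^ 2 / (9 * ((k:ℝ) + 1)) * (lam 0 y - lam 1 y) ^ (k + 1) *
        (lam 2 y - lam 1 y))
        = fun y => (4 * area ^ 2 / (9 * ((k:ℝ) + 1))) *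
            (dot2 (g 0 - g 1) y + (cst 0 - cst 1)) ^ (k + 1) *
            (dot2 (g 2 - g 1) y + (cst 2 - cst 1)) := by
      funext y
      rw [hlam 0 y, hlam 1 y, hlam 2 y]
      simp only [dot2, Pi.sub_apply]
      ring
    rw [hfun]
    ext i j
    fin_cases i <;> fin_cases j <;>
      simp only [Fin.mk_zero, Fin.mk_one, airy, psiB, Matrix.of_apply, Matrix.cons_val',
        Matrix.cons_val_zero, Matrix.cons_val_one, Matrix.head_cons, Matrix.head_fin_const,
        Matrix.empty_val', Matrix.cons_val_fin_one, Matrix.sub_apply, Matrix.smul_apply,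
        Matrix.add_apply, Matrix.neg_apply, symOuter, outer, smul_eq_mul,
        show ((0:Fin 3) + 1) = 1 from rfl, show ((0:Fin 3) + 2) = 2 from rfl] <;>
      rw [pd_pd_CLM] <;>
      simp only [Nat.add_sub_cancel, Nat.cast_add, Nat.cast_one] <;>
      rw [hCC] <;>
      simp only [ht00, ht01, ht20, ht21] <;>
      simp only [hlam, dot2, Pi.sub_apply] <;>
      ring
  have hlamc : ∀ i : Fin 3, Continuous (lam i) := by
    intro i
    have hi : lam i = fun x => g i 0 * x 0 + g i 1 * x 1 + cst i := by
      funext x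
      rw [hlam]
      simp [dot2]
    rw [hi]
    exact (((continuous_const.mul (continuous_apply 0)).add
      (continuous_const.mul (continuous_apply 1))).add continuous_const)
  have hopen : ∀ j : Fin 3, IsOpen {x | inReg lam j x} := by
    intro j
    have hset : {x | inReg lam j x} = ⋂ i : Fin 3, {x | i ≠ j → lam j x < lam i x} := by
      ext x
      simp [inReg, Set.mem_iInter]
    rw [hset]
    refine isOpen_iInter_of_finite fun i => ?_
    by_cases hij : i = j
    · simp [hij]
    · have hs2 : {x | i ≠ j → lam j x < lam i x} = {x | lam j x < lam i x} := by
        ext x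
        simp [hij]
      rw [hs2]
      exact isOpen_lt (hlamc j) (hlamc i)
  have hreg2min : ∀ y, inReg lam 2 y → min (lam 0 y) (min (lam 1 y) (lam 2 y)) = lam 2 y := by
    intro y hy
    have h0 := hy 0 (by decide)
    have h1 := hy 1 (by decide)
    rw [min_eq_right h1.le, min_eq_right h0.le]
  have hreg1min : ∀ y, inReg lam 1 y → min (lam 0 y) (min (lam 1 y) (lam 2 y)) = lam 1 y := by
    intro y hy
    have h0 := hy 0 (by decide)
    have h2 := hy 2 (by decide)
    rw [min_eq_left h2.le, min_eq_right h0.le]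
  have hreg0min : ∀ y, inReg lam 0 y → min (lam 0 y) (min (lam 1 y) (lam 2 y)) = lam 0 y := by
    intro y hy
    have h1 := hy 1 (by decide)
    have h2 := hy 2 (by decide)
    exact min_eq_left (le_min h1.le h2.le)
  have hv2 : ∀ y ∈ {x | inReg lam 2 x}, vEnrich lam area k 0 y
      = 4 * area ^ 2 / (9 * ((k:ℝ) + 1)) * (lam 0 y - lam 2 y) ^ (k + 1) *
        (lam 2 y - lam 1 y) := by
    intro y hy
    unfold vEnrich lamR
    rw [hreg2min y hy]
    rfl
  have hv1 : ∀ y ∈ {x | inReg lam 1 x}, vEnrich lam area k 0 y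
      = 4 * area ^ 2 / (9 * ((k:ℝ) + 1)) * (lam 0 y - lam 1 y) ^ (k + 1) *
        (lam 2 y - lam 1 y) := by
    intro y hy
    unfold vEnrich lamR
    rw [hreg1min y hy]
    rfl
  have hv0 : ∀ y ∈ {x | inReg lam 0 x}, vEnrich lam area k 0 y = (fun _ : Vec2 => (0:ℝ)) y := by
    intro y hy
    unfold vEnrich lamR
    rw [hreg0min y hy]
    simp
  have hnot21 : ∀ y, inReg lam 1 y → ¬ inReg lam 2 y := fun y hy hc =>
    absurd (hy 2 (by decide)) (not_lt.2 (hc 1 (by decide)).le)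
  have hnot20 : ∀ y, inReg lam 0 y → ¬ inReg lam 2 y := fun y hy hc =>
    absurd (hy 2 (by decide)) (not_lt.2 (hc 0 (by decide)).le)
  have hnot10 : ∀ y, inReg lam 0 y → ¬ inReg lam 1 y := fun y hy hc =>
    absurd (hy 1 (by decide)) (not_lt.2 (hc 0 (by decide)).le)
  have hpsi2 : ∀ y, inReg lam 2 y → psiFun lam tc k 0 y = psiA lam tc k 0 y := by
    intro y hy
    unfold psiFun
    split_ifs with hc1 hc2
    · rfl
    · exact absurd hy hc1
    · exact absurd hy hc1
  have hpsi1 : ∀ y, inReg lam 1 y → psiFun lam tc k 0 y = psiB lam tc k 0 y := by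
    intro y hy
    unfold psiFun
    split_ifs with hc1 hc2
    · exact absurd hc1 (hnot21 y hy)
    · rfl
    · exact absurd hy hc2
  have hpsi0 : ∀ y, inReg lam 0 y → psiFun lam tc k 0 y = 0 := by
    intro y hy
    unfold psiFun
    split_ifs with hc1 hc2
    · exact absurd hc1 (hnot20 y hy)
    · exact absurd hc2 (hnot10 y hy)
    · rfl
  have part3 : ∀ x, inReg lam 0 x ∨ inReg lam 1 x ∨ inReg lam 2 x →
      airy (vEnrich lam area k 0) x = psiFun lam tc k 0 x := by
    rintro x (hx | hx | hx)
    · rw [airy_congr (hopen 0) hx hv0, hpsi0 x hx, airy_zero_fun]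
    · rw [airy_congr (hopen 1) hx hv1, hpsi1 x hx]
      exact part1B x
    · rw [airy_congr (hopen 2) hx hv2, hpsi2 x hx]
      exact part1A x
  have hentA : ∀ i c : Fin 2, (fun y => psiA lam tc k 0 y i c)
      = fun y => (2 * symOuter (tc 0) (tc 1) i c) * (dot2 (g 0 - g 2) y + (cst 0 - cst 2)) ^ k
        + (-((k:ℝ) * outer (tc 1) (tc 1) i c)) * (dot2 (g 0 - g 2) y + (cst 0 - cst 2)) ^ (k-1)
          * (dot2 (g 1 - g 2) y + (cst 1 - cst 2)) := by
    intro i c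
    funext y
    simp only [psiA, Matrix.sub_apply, Matrix.smul_apply, smul_eq_mul,
      show ((0:Fin 3)+2) = 2 from rfl, show ((0:Fin 3)+1) = 1 from rfl]
    rw [hlam 0 y, hlam 1 y, hlam 2 y]
    simp only [dot2, Pi.sub_apply]
    ring
  have hentB : ∀ i c : Fin 2, (fun y => psiB lam tc k 0 y i c)
      = fun y => (-(2 * symOuter (tc 0) (tc 2) i c)) * (dot2 (g 0 - g 1) y + (cst 0 - cst 1)) ^ k
        + ((k:ℝ) * outer (tc 2) (tc 2) i c) * (dot2 (g 0 - g 1) y + (cst 0 - cst 1)) ^ (k-1)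
          * (dot2 (g 2 - g 1) y + (cst 2 - cst 1)) := by
    intro i c
    funext y
    simp only [psiB, Matrix.add_apply, Matrix.neg_apply, Matrix.smul_apply, smul_eq_mul,
      show ((0:Fin 3)+2) = 2 from rfl, show ((0:Fin 3)+1) = 1 from rfl]
    rw [hlam 0 y, hlam 1 y, hlam 2 y]
    simp only [dot2, Pi.sub_apply]
    ring
  have divA : ∀ (x : Vec2) (i : Fin 2),
      pd 0 (fun y => psiA lam tc k 0 y i 0) x + pd 1 (fun y => psiA lam tc k 0 y i 1) x = 0 := by
    intro x i
    rw [hentA i 0, hentA i 1, pd_entry, pd_entry]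
    fin_cases i <;>
      simp only [symOuter, outer, Matrix.smul_apply, Matrix.add_apply, smul_eq_mul,
        Fin.mk_zero, Fin.mk_one, Fin.isValue, Pi.sub_apply, dot2] <;>
      simp only [ht00, ht01, ht10, ht11] <;>
      ring
  have divB : ∀ (x : Vec2) (i : Fin 2),
      pd 0 (fun y => psiB lam tc k 0 y i 0) x + pd 1 (fun y => psiB lam tc k 0 y i 1) x = 0 := by
    intro x i
    rw [hentB i 0, hentB i 1, pd_entry, pd_entry]
    fin_cases i <;>
      simp only [symOuter, outer, Matrix.smul_apply, Matrix.add_apply, smul_eq_mul,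
        Fin.mk_zero, Fin.mk_one, Fin.isValue, Pi.sub_apply, dot2] <;>
      simp only [ht00, ht01, ht20, ht21] <;>
      ring
  have part4 : ∀ x, inReg lam 0 x ∨ inReg lam 1 x ∨ inReg lam 2 x → ∀ i : Fin 2,
      pd 0 (fun y => psiFun lam tc k 0 y i 0) x +
        pd 1 (fun y => psiFun lam tc k 0 y i 1) x = 0 := by
    rintro x (hx | hx | hx) i
    · have e0 : pd 0 (fun y => psiFun lam tc k 0 y i 0) x
          = pd 0 (fun _ : Vec2 => (0:ℝ)) x :=
        pd_congr (hopen 0) hx (fun y hy => by rw [hpsi0 y hy]; rfl) 0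
      have e1 : pd 1 (fun y => psiFun lam tc k 0 y i 1) x
          = pd 1 (fun _ : Vec2 => (0:ℝ)) x :=
        pd_congr (hopen 0) hx (fun y hy => by rw [hpsi0 y hy]; rfl) 1
      rw [e0, e1, pd_zero_fun, pd_zero_fun]
      norm_num
    · have e0 : pd 0 (fun y => psiFun lam tc k 0 y i 0) x
          = pd 0 (fun y => psiB lam tc k 0 y i 0) x :=
        pd_congr (hopen 1) hx (fun y hy => by rw [hpsi1 y hy]) 0
      have e1 : pd 1 (fun y => psiFun lam tc k 0 y i 1) x
          = pd 1 (fun y => psiB lam tc k 0 y i 1) x :=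
        pd_congr (hopen 1) hx (fun y hy => by rw [hpsi1 y hy]) 1
      rw [e0, e1]
      exact divB x i
    · have e0 : pd 0 (fun y => psiFun lam tc k 0 y i 0) x
          = pd 0 (fun y => psiA lam tc k 0 y i 0) x :=
        pd_congr (hopen 2) hx (fun y hy => by rw [hpsi2 y hy]) 0
      have e1 : pd 1 (fun y => psiFun lam tc k 0 y i 1) x
          = pd 1 (fun y => psiA lam tc k 0 y i 1) x :=
        pd_congr (hopen 2) hx (fun y hy => by rw [hpsi2 y hy]) 1
      rw [e0, e1]
      exact divA x i
  exact ⟨part1A, part1B, part3, part4⟩
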